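/- Let a(τ) = τ/(1 + Kτ) with K = 2k₁ + (2+n)k₂ + 1, b(τ) = e^{k₄τ}, and c(τ) = (e^{k₅k₄τ} n k₂ + k₃)·τ with k₅ = 1 + k₃/(n k₂), where k₁, k₂, k₃, k₄ > 0 and n ≥ 1. Then for all τ ∈ [0,1]: (i) a'(τ) + K·a(τ) − b(τ) ≤ 0, (ii) k₄·b(τ) − b'(τ) ≤ 0, and (iii) k₃·a(τ) − c'(τ) + n k₂ b(τ) + k₄ c(τ) ≤ 0. -/

import Mathlib

open Set

theorem auxiliary_functions_inequalities (n : ℕ) (hn : 1 ≤ n)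
    (k₁ k₂ k₃ k₄ : ℝ) (hk₁ : 0 < k₁) (hk₂ : 0 < k₂) (hk₃ : 0 < k₃) (hk₄ : 0 < k₄)
    (K k₅ : ℝ) (hK : K = 2 * k₁ + (2 + n) * k₂ + 1) (hk₅ : k₅ = 1 + k₃ / (n * k₂))
    (a b c : ℝ → ℝ)
    (ha : a = fun τ => τ / (1 + K * τ))
    (hb : b = fun τ => Real.exp (k₄ * τ))
    (hc : c = fun τ => (Real.exp (k₅ * k₄ * τ) * n * k₂ + k₃) * τ) :
    ∀ τ ∈ Icc (0 : ℝ) 1,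
      deriv a τ + K * a τ - b τ ≤ 0 ∧
      k₄ * b τ - deriv b τ ≤ 0 ∧
      k₃ * a τ - deriv c τ + n * k₂ * b τ + k₄ * c τ ≤ 0 := by
  intro τ hτ
  obtain ⟨hτ0, hτ1⟩ := hτ
  have hn' : (1:ℝ) ≤ (n:ℝ) := by exact_mod_cast hn
  have hK0 : 0 < K := by nlinarith
  have hden : 0 < 1 + K * τ := by nlinarith
  have hnk₂ : 0 < (n:ℝ) * k₂ := by positivity
  have hk₅1 : 1 ≤ k₅ := by
    rw [hk₅]; nlinarith [div_pos hk₃ hnk₂]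
  have hk5eq : k₅ * ((n:ℝ) * k₂) = (n:ℝ) * k₂ + k₃ := by
    rw [hk₅]; field_simp
  -- derivatives
  have hda : HasDerivAt a (1 / (1 + K * τ)^2) τ := by
    have h2 : HasDerivAt (fun x : ℝ => 1 + K * x) K τ := by
      simpa using ((hasDerivAt_id τ).const_mul K).const_add 1
    have := (hasDerivAt_id τ).div h2 hden.ne'
    rw [ha]
    refine HasDerivAt.congr_deriv this ?_
    simp only [id]
    field_simp
    ring
  have hexp : ∀ m : ℝ, HasDerivAt (fun x : ℝ => Real.exp (m * x)) (Real.exp (m * τ) * m) τ := by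
    intro m
    exact ((Real.hasDerivAt_exp (m * τ)).comp τ ((hasDerivAt_id τ).const_mul m)).congr_deriv (by simp)
  have hdb : HasDerivAt b (Real.exp (k₄ * τ) * k₄) τ := by rw [hb]; exact hexp k₄
  have hdc : HasDerivAt c (Real.exp (k₅ * k₄ * τ) * (k₅ * k₄) * (n:ℝ) * k₂ * τ
      + (Real.exp (k₅ * k₄ * τ) * (n:ℝ) * k₂ + k₃)) τ := by
    rw [hc]
    have h1 : HasDerivAt (fun x : ℝ => Real.exp (k₅ * k₄ * x) * (n:ℝ) * k₂ + k₃)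
        (Real.exp (k₅ * k₄ * τ) * (k₅ * k₄) * (n:ℝ) * k₂) τ := by
      exact (((hexp (k₅ * k₄)).mul_const (n:ℝ)).mul_const k₂).add_const k₃
    have := h1.mul (hasDerivAt_id τ)
    exact this.congr_deriv (by simp)
  rw [hda.deriv, hdb.deriv, hdc.deriv, ha, hb, hc]
  simp only
  set E := Real.exp (k₅ * k₄ * τ) with hE
  set e := Real.exp (k₄ * τ) with he
  have he1 : 1 ≤ e := Real.one_le_exp (by positivity)
  have heE : e ≤ E := Real.exp_le_exp.mpr (by nlinarith [mul_nonneg (mul_nonneg (sub_nonneg.mpr hk₅1) hk₄.le) hτ0])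
  have hale : τ / (1 + K * τ) ≤ τ := by
    apply div_le_self hτ0; nlinarith
  have hapos : 0 ≤ τ / (1 + K * τ) := by positivity
  refine ⟨?_, ?_, ?_⟩
  · have key : 1 / (1 + K * τ)^2 + K * (τ / (1 + K * τ)) ≤ 1 := by
      rw [div_add' _ _ _ (by positivity), div_le_one (by positivity)]
      have : K * (τ / (1 + K * τ)) * (1 + K * τ)^2 = K * τ * (1 + K * τ) := by
        field_simp
      nlinarith
    linarith
  · nlinarith
  · have h5 : E * (k₅ * k₄) * (n:ℝ) * k₂ * τ = E * k₄ * τ * ((n:ℝ) * k₂ + k₃) := by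
      rw [← hk5eq]; ring
    rw [h5]
    nlinarith [mul_le_mul_of_nonneg_left heE (le_of_lt hnk₂),
      mul_le_mul_of_nonneg_left hale (le_of_lt hk₃),
      mul_nonneg (mul_nonneg hk₄.le hk₃.le) (mul_nonneg hτ0 (by linarith : (0:ℝ) ≤ E - 1))]
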